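/- Let a, b, c > 0 with ab ≠ 0, and let r be in an interval where (3/2)(ab)^{1/4} r + c > 0. Define f₁(r) = (b/a)^{1/4}((3/2)(ab)^{1/4} r + c)^{1/3}, f₂(r) = (a/b)^{1/4}((3/2)(ab)^{1/4} r + c)^{1/3}, f₃(r) = (ab)^{1/4}/((3/2)(ab)^{1/4} r + c)^{1/3}. Then d/dr(f₁f₂) = f₃, d/dr(f₁f₃) = 0, and d/dr(f₂f₃) = 0. -/

import Mathlib

/-- u(r) = (3/2)(ab)^{1/4} r + c. -/
noncomputable def heisU (a b c : ℝ) (r : ℝ) : ℝ := (3/2) * (a * b) ^ ((1:ℝ)/4) * r + c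

lemma heisU_hasDerivAt (a b c r : ℝ) :
    HasDerivAt (heisU a b c) ((3/2) * (a * b) ^ ((1:ℝ)/4)) r := by
  have h := ((hasDerivAt_id r).const_mul ((3/2) * (a * b) ^ ((1:ℝ)/4))).add_const c
  simp only [mul_one] at h
  exact h

lemma heisU_cont (a b c : ℝ) : Continuous (heisU a b c) := by
  unfold heisU; continuity

/-- Heisenberg (Bianchi II) solution
f₁ = (b/a)^{1/4} u^{1/3}, f₂ = (a/b)^{1/4} u^{1/3}, f₃ = (ab)^{1/4}/u^{1/3}
satisfies (f₁f₂)' = f₃, (f₁f₃)' = 0, (f₂f₃)' = 0. -/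
theorem stmt_5 (a b c : ℝ) (ha : 0 < a) (hb : 0 < b) (r : ℝ) (hu : 0 < heisU a b c r) :
    HasDerivAt (fun s => ((b / a) ^ ((1:ℝ)/4) * (heisU a b c s) ^ ((1:ℝ)/3)) *
        ((a / b) ^ ((1:ℝ)/4) * (heisU a b c s) ^ ((1:ℝ)/3)))
      ((a * b) ^ ((1:ℝ)/4) / (heisU a b c r) ^ ((1:ℝ)/3)) r ∧
    HasDerivAt (fun s => ((b / a) ^ ((1:ℝ)/4) * (heisU a b c s) ^ ((1:ℝ)/3)) *
        ((a * b) ^ ((1:ℝ)/4) / (heisU a b c s) ^ ((1:ℝ)/3))) 0 r ∧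
    HasDerivAt (fun s => ((a / b) ^ ((1:ℝ)/4) * (heisU a b c s) ^ ((1:ℝ)/3)) *
        ((a * b) ^ ((1:ℝ)/4) / (heisU a b c s) ^ ((1:ℝ)/3))) 0 r := by
  set u := heisU a b c r with hudef
  have hune : u ≠ 0 := ne_of_gt hu
  have hab : (0:ℝ) < a * b := mul_pos ha hb
  have hev : ∀ᶠ s in nhds r, 0 < heisU a b c s :=
    (heisU_cont a b c).continuousAt.eventually_mem (isOpen_Ioi.mem_nhds hu)
  have hg : HasDerivAt (fun s => (heisU a b c s) ^ ((1:ℝ)/3))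
      (((3/2) * (a * b) ^ ((1:ℝ)/4)) * ((1:ℝ)/3) * u ^ ((1:ℝ)/3 - 1)) r :=
    (heisU_hasDerivAt a b c r).rpow_const (Or.inl hune)
  refine ⟨?_, ?_, ?_⟩
  · have h1 : HasDerivAt (fun s => ((b / a) ^ ((1:ℝ)/4) * (heisU a b c s) ^ ((1:ℝ)/3)) *
        ((a / b) ^ ((1:ℝ)/4) * (heisU a b c s) ^ ((1:ℝ)/3)))
        (((b / a) ^ ((1:ℝ)/4) * (((3/2) * (a * b) ^ ((1:ℝ)/4)) * ((1:ℝ)/3) * u ^ ((1:ℝ)/3 - 1))) *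
          ((a / b) ^ ((1:ℝ)/4) * u ^ ((1:ℝ)/3)) +
         ((b / a) ^ ((1:ℝ)/4) * u ^ ((1:ℝ)/3)) *
          ((a / b) ^ ((1:ℝ)/4) * (((3/2) * (a * b) ^ ((1:ℝ)/4)) * ((1:ℝ)/3) * u ^ ((1:ℝ)/3 - 1)))) r :=
      (hg.const_mul _).mul (hg.const_mul _)
    have hc : (b / a) ^ ((1:ℝ)/4) * (a / b) ^ ((1:ℝ)/4) = 1 := by
      rw [← Real.mul_rpow (by positivity) (by positivity)]
      rw [div_mul_div_comm, mul_comm b a, div_self (by positivity), Real.one_rpow]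
    have hpow : u ^ ((1:ℝ)/3 - 1) * u ^ ((1:ℝ)/3) = u ^ (-((1:ℝ)/3)) := by
      rw [← Real.rpow_add hu]; norm_num
    have hinv : u ^ (-((1:ℝ)/3)) = (u ^ ((1:ℝ)/3))⁻¹ := Real.rpow_neg hu.le _
    have key : (((b / a) ^ ((1:ℝ)/4) * (((3/2) * (a * b) ^ ((1:ℝ)/4)) * ((1:ℝ)/3) * u ^ ((1:ℝ)/3 - 1))) *
          ((a / b) ^ ((1:ℝ)/4) * u ^ ((1:ℝ)/3)) +
         ((b / a) ^ ((1:ℝ)/4) * u ^ ((1:ℝ)/3)) *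
          ((a / b) ^ ((1:ℝ)/4) * (((3/2) * (a * b) ^ ((1:ℝ)/4)) * ((1:ℝ)/3) * u ^ ((1:ℝ)/3 - 1))))
        = (a * b) ^ ((1:ℝ)/4) / u ^ ((1:ℝ)/3) := by
      calc _ = ((b / a) ^ ((1:ℝ)/4) * (a / b) ^ ((1:ℝ)/4)) * ((a * b) ^ ((1:ℝ)/4)) *
              (u ^ ((1:ℝ)/3 - 1) * u ^ ((1:ℝ)/3)) := by ring
        _ = (a * b) ^ ((1:ℝ)/4) * (u ^ ((1:ℝ)/3))⁻¹ := by rw [hc, hpow, hinv]; ring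
        _ = (a * b) ^ ((1:ℝ)/4) / u ^ ((1:ℝ)/3) := by ring
    exact key ▸ h1
  · have heq : (fun s => ((b / a) ^ ((1:ℝ)/4) * (heisU a b c s) ^ ((1:ℝ)/3)) *
        ((a * b) ^ ((1:ℝ)/4) / (heisU a b c s) ^ ((1:ℝ)/3))) =ᶠ[nhds r]
        (fun _ => (b / a) ^ ((1:ℝ)/4) * (a * b) ^ ((1:ℝ)/4)) := by
      filter_upwards [hev] with s hs
      have h3 : (heisU a b c s) ^ ((1:ℝ)/3) ≠ 0 := by positivity
      field_simp
    exact (hasDerivAt_const r _).congr_of_eventuallyEq heq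
  · have heq : (fun s => ((a / b) ^ ((1:ℝ)/4) * (heisU a b c s) ^ ((1:ℝ)/3)) *
        ((a * b) ^ ((1:ℝ)/4) / (heisU a b c s) ^ ((1:ℝ)/3))) =ᶠ[nhds r]
        (fun _ => (a / b) ^ ((1:ℝ)/4) * (a * b) ^ ((1:ℝ)/4)) := by
      filter_upwards [hev] with s hs
      have h3 : (heisU a b c s) ^ ((1:ℝ)/3) ≠ 0 := by positivity
      field_simp
    exact (hasDerivAt_const r _).congr_of_eventuallyEq heq
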